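/- Let n be a natural number and let S, T be subspaces of ℂⁿ. Then dim α(S,T) ≤ n − max(dim S, dim T), i.e., finrank ℂ (((T ⊔ Sᗮ) ⊓ S) ⊓ (S ⊓ T)ᗮ) ≤ n − max (finrank ℂ S) (finrank ℂ T). -/

import Mathlib

open Module Submodule

/-- `dim α(S,T) ≤ n − max (dim S) (dim T)` where `α(S,T) = ((T ⊔ Sᗮ) ⊓ S) ⊓ (S ⊓ T)ᗮ`. -/
theorem stmt_5 (n : ℕ) (S T : Submodule ℂ (EuclideanSpace ℂ (Fin n))) :
    Module.finrank ℂ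
        ((((T ⊔ Sᗮ) ⊓ S) ⊓ (S ⊓ T)ᗮ) : Submodule ℂ (EuclideanSpace ℂ (Fin n))) ≤
      n - max (Module.finrank ℂ S) (Module.finrank ℂ T) := by
  set A := ((T ⊔ Sᗮ) ⊓ S) ⊓ (S ⊓ T)ᗮ with hA
  have hdisj : Disjoint A (S ⊓ T) := by
    have := (S ⊓ T).orthogonal_disjoint.symm
    exact this.mono_left (le_trans inf_le_right le_rfl)
  have hsum : finrank ℂ A + finrank ℂ (S ⊓ T : Submodule ℂ _) =
      finrank ℂ (A ⊔ (S ⊓ T) : Submodule ℂ _) := by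
    have h := Submodule.finrank_sup_add_finrank_inf_eq A (S ⊓ T)
    rw [hdisj.eq_bot] at h
    simp at h
    omega
  -- A ⊔ (S ⊓ T) ≤ (T ⊔ Sᗮ) ⊓ S
  have hle : A ⊔ (S ⊓ T) ≤ (T ⊔ Sᗮ) ⊓ S := by
    apply sup_le inf_le_left
    exact le_inf (le_trans inf_le_right le_sup_left) inf_le_left
  have h1 : finrank ℂ (A ⊔ (S ⊓ T) : Submodule ℂ _) ≤
      finrank ℂ (((T ⊔ Sᗮ) ⊓ S) : Submodule ℂ _) := Submodule.finrank_mono hle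
  -- dim ((T ⊔ Sᗮ) ⊓ S) + n = dim (T ⊔ Sᗮ) + dim S
  have htop : (T ⊔ Sᗮ) ⊔ S = ⊤ := by
    rw [sup_assoc, sup_comm Sᗮ S, Submodule.sup_orthogonal_of_hasOrthogonalProjection, sup_top_eq]
  have h2 := Submodule.finrank_sup_add_finrank_inf_eq (T ⊔ Sᗮ) S
  rw [htop] at h2
  have hn : finrank ℂ (⊤ : Submodule ℂ (EuclideanSpace ℂ (Fin n))) = n := by
    simp [finrank_euclideanSpace_fin]
  rw [hn] at h2
  have h3 : finrank ℂ (T ⊔ Sᗮ : Submodule ℂ _) ≤ finrank ℂ T + finrank ℂ Sᗮ := by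
    have := Submodule.finrank_sup_add_finrank_inf_eq T Sᗮ
    omega
  have h4 : finrank ℂ S + finrank ℂ Sᗮ = n := by
    have := Submodule.finrank_add_finrank_orthogonal S
    rwa [finrank_euclideanSpace_fin] at this
  have h5 := Submodule.finrank_sup_add_finrank_inf_eq S T
  have h6 : finrank ℂ (S ⊔ T : Submodule ℂ _) ≤ n := by
    have := Submodule.finrank_le (S ⊔ T)
    rwa [finrank_euclideanSpace_fin] at this
  have h7 : finrank ℂ (A ⊔ (S ⊓ T) : Submodule ℂ _) ≤ finrank ℂ S :=
    Submodule.finrank_mono (hle.trans inf_le_right)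
  rcases le_total (finrank ℂ S) (finrank ℂ T) with h | h
  · rw [max_eq_right h]; omega
  · rw [max_eq_left h]; omega
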